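/- Let u ⊆ {1,…,d} and v, v' ⊆ u^c, and let (x_i, y_i, z_i, w_i), i = 1,…,n, be i.i.d. random quadruples whose four components are independent and each uniformly distributed on [0,1]^d. Then the generalized estimator τ̂²_u = (1/n) Σ_{i=1}^n (f(x_i) − f(x_{i,v} : z_{i,-v})) · (f(x_{i,u} : y_{i,-u}) − f(y_{i,v'} : w_{i,-v'})) is an unbiased estimator of the lower Sobol' index: E[τ̂²_u] = τ̲²_u. -/

import Mathlib

open MeasureTheory Finset

/-- The uniform (Lebesgue) probability measure on the interval `[0,1]`. -/
noncomputable def unifSeg : Measure ℝ := (volume : Measure ℝ).restrict (Set.Icc 0 1)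

/-- The uniform (Lebesgue) product probability measure on the cube `[0,1]^d`. -/
noncomputable def unifCube (d : ℕ) : Measure (Fin d → ℝ) :=
  Measure.pi fun _ => unifSeg

/-- `glue u x y` is the point whose `j`-th coordinate is `x j` for `j ∈ u`
and `y j` otherwise, i.e. `(x_u : y_{-u})`. -/
def glue {d : ℕ} (u : Finset (Fin d)) (x y : Fin d → ℝ) : Fin d → ℝ :=
  fun j => if j ∈ u then x j else y j

/-- The lower Sobol' index `τ̲²_u` of the set `u`. -/
noncomputable def lowerSobol {d : ℕ} (f : (Fin d → ℝ) → ℝ) (u : Finset (Fin d)) : ℝ :=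
  (∫ x, (∫ y, f (glue u x y) ∂(unifCube d)) ^ 2 ∂(unifCube d))
    - (∫ x, f x ∂(unifCube d)) ^ 2

/-- The variance `σ²` of `f` over the unit cube. -/
noncomputable def sigmaSq {d : ℕ} (f : (Fin d → ℝ) → ℝ) : ℝ :=
  (∫ x, f x ^ 2 ∂(unifCube d)) - (∫ x, f x ∂(unifCube d)) ^ 2

/-- The upper Sobol' index `τ̄²_u = σ² - τ̲²_{uᶜ}` of the set `u`. -/
noncomputable def upperSobol {d : ℕ} (f : (Fin d → ℝ) → ℝ) (u : Finset (Fin d)) : ℝ :=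
  sigmaSq f - lowerSobol f uᶜ

instance : IsProbabilityMeasure unifSeg :=
  ⟨by simp [unifSeg, Real.volume_Icc]⟩

instance (d : ℕ) : IsProbabilityMeasure (unifCube d) := by
  unfold unifCube; infer_instance

namespace SobolAux

variable {d : ℕ}

lemma measurable_glue (u : Finset (Fin d)) :
    Measurable (fun p : (Fin d → ℝ) × (Fin d → ℝ) => glue u p.1 p.2) := by
  refine measurable_pi_lambda _ fun j => ?_
  unfold glue
  by_cases h : j ∈ u <;> simp only [h, if_true, if_false]
  · exact (measurable_pi_apply j).comp measurable_fst
  · exact (measurable_pi_apply j).comp measurable_snd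

lemma mp_fst {α β : Type*} [MeasurableSpace α] [MeasurableSpace β]
    (μ : Measure α) (ν : Measure β) [SFinite μ] [SFinite ν] [IsProbabilityMeasure ν] :
    MeasurePreserving Prod.fst (μ.prod ν) μ :=
  ⟨measurable_fst, by simp⟩

lemma mp_snd {α β : Type*} [MeasurableSpace α] [MeasurableSpace β]
    (μ : Measure α) (ν : Measure β) [SFinite μ] [SFinite ν] [IsProbabilityMeasure μ] :
    MeasurePreserving Prod.snd (μ.prod ν) ν :=
  ⟨measurable_snd, by simp⟩

lemma glue_measurePreserving (u : Finset (Fin d)) :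
    MeasurePreserving (fun p : (Fin d → ℝ) × (Fin d → ℝ) => glue u p.1 p.2)
      ((unifCube d).prod (unifCube d)) (unifCube d) := by
  classical
  set p : Fin d → Prop := fun j => j ∈ u with hp
  let e := MeasurableEquiv.piEquivPiSubtypeProd (fun _ : Fin d => ℝ) p
  have he : MeasurePreserving e (unifCube d) _ :=
    measurePreserving_piEquivPiSubtypeProd (fun _ : Fin d => unifSeg) p
  have h1 := (mp_fst _ _).comp he
  have h2 := (mp_snd _ _).comp he
  have hmain := h1.prod h2
  have hfun : (fun q : (Fin d → ℝ) × (Fin d → ℝ) => glue u q.1 q.2)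
      = (⇑e.symm ∘ fun q : (Fin d → ℝ) × (Fin d → ℝ) => ((e q.1).1, (e q.2).2)) := by
    funext q
    show glue u q.1 q.2 = e.symm ((e q.1).1, (e q.2).2)
    funext j
    by_cases h : j ∈ u <;>
      simp [glue, e, MeasurableEquiv.piEquivPiSubtypeProd, hp, h]
  rw [hfun]
  refine (MeasurePreserving.symm e he).comp ?_
  have : (fun q : (Fin d → ℝ) × (Fin d → ℝ) => ((e q.1).1, (e q.2).2))
      = Prod.map (fun x => (e x).1) (fun x => (e x).2) := rfl
  rw [this]
  exact hmain


lemma memℒp_comp_mp {α : Type*} [MeasurableSpace α] {ν : Measure α}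
    {φ : α → (Fin d → ℝ)} {g : (Fin d → ℝ) → ℝ} {p : ENNReal}
    (hφ : MeasurePreserving φ ν (unifCube d)) (hg : AEStronglyMeasurable g (unifCube d))
    (h : MemLp g p (unifCube d)) :
    MemLp (fun a => g (φ a)) p ν := by
  have := (memLp_map_measure_iff (by rwa [hφ.map_eq]) hφ.measurable.aemeasurable).mp
    (by rwa [hφ.map_eq] : MemLp g p (Measure.map φ ν))
  exact this

lemma integrable_comp_mp {α : Type*} [MeasurableSpace α] {ν : Measure α}
    {φ : α → (Fin d → ℝ)} {g : (Fin d → ℝ) → ℝ}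
    (hφ : MeasurePreserving φ ν (unifCube d)) (hg : AEStronglyMeasurable g (unifCube d))
    (h : Integrable g (unifCube d)) :
    Integrable (fun a => g (φ a)) ν := by
  have := (integrable_map_measure (by rwa [hφ.map_eq]) hφ.measurable.aemeasurable).mp
    (by rwa [hφ.map_eq] : Integrable g (Measure.map φ ν))
  exact this

lemma integral_comp_mp {α : Type*} [MeasurableSpace α] {ν : Measure α}
    {φ : α → (Fin d → ℝ)} {g : (Fin d → ℝ) → ℝ}
    (hφ : MeasurePreserving φ ν (unifCube d)) (hg : AEStronglyMeasurable g (unifCube d)) :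
    ∫ a, g (φ a) ∂ν = ∫ x, g x ∂(unifCube d) := by
  rw [← hφ.map_eq, integral_map hφ.measurable.aemeasurable (by rwa [hφ.map_eq])]

lemma integrable_L2_mul {α : Type*} [MeasurableSpace α] {ν : Measure α}
    {g h : α → ℝ} (hg : MemLp g 2 ν) (hh : MemLp h 2 ν) :
    Integrable (fun x => g x * h x) ν := by
  have := hh.smul (φ := g) hg (r := 1)
  rw [memLp_one_iff_integrable] at this
  simp only [smul_eq_mul] at this
  exact this

/-- Jensen/Cauchy–Schwarz: on a probability space, `(∫ g)² ≤ ∫ g²`. -/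
lemma sq_integral_le_integral_sq {α : Type*} [MeasurableSpace α] {ν : Measure α}
    [IsProbabilityMeasure ν] {g : α → ℝ} (hg : MemLp g 2 ν) :
    (∫ y, g y ∂ν) ^ 2 ≤ ∫ y, g y ^ 2 ∂ν := by
  have hg1 : Integrable g ν := hg.integrable one_le_two
  have hg2 : Integrable (fun y => g y ^ 2) ν := hg.integrable_sq
  have habs : |∫ y, g y ∂ν| ≤ ∫ y, |g y| ∂ν := by
    simpa [Real.norm_eq_abs] using norm_integral_le_integral_norm (μ := ν) g
  have hconj : Real.HolderConjugate 2 2 := Real.HolderConjugate.two_two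
  have h2 : (ENNReal.ofReal (2:ℝ)) = 2 := by norm_num
  have hmem : MemLp (fun y => |g y|) (ENNReal.ofReal (2:ℝ)) ν := by
    rw [h2]; simpa [Real.norm_eq_abs] using hg.norm
  have hone : MemLp (fun _ : α => (1:ℝ)) (ENNReal.ofReal (2:ℝ)) ν := by
    rw [h2]; exact memLp_const 1
  have hcs := integral_mul_le_Lp_mul_Lq_of_nonneg (μ := ν) hconj
    (Filter.Eventually.of_forall fun y => abs_nonneg (g y))
    (Filter.Eventually.of_forall fun _ => zero_le_one) hmem hone
  have hsq : ∀ y, |g y| ^ (2:ℝ) = g y ^ 2 := fun y => by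
    rw [show (2:ℝ) = ((2:ℕ):ℝ) by norm_num, Real.rpow_natCast, sq_abs]
  have hone' : ∫ y, (1:ℝ) ^ (2:ℝ) ∂ν = 1 := by simp
  rw [hone'] at hcs
  simp only [mul_one, Real.one_rpow] at hcs
  have hcs' : ∫ y, |g y| ∂ν ≤ (∫ y, g y ^ 2 ∂ν) ^ ((1:ℝ)/2) := by
    calc ∫ y, |g y| ∂ν ≤ (∫ y, |g y| ^ (2:ℝ) ∂ν) ^ (1/(2:ℝ)) := hcs
    _ = (∫ y, g y ^ 2 ∂ν) ^ ((1:ℝ)/2) := by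
        congr 1; exact integral_congr_ae (Filter.Eventually.of_forall fun y => hsq y)
  have hnn : (0:ℝ) ≤ ∫ y, g y ^ 2 ∂ν :=
    integral_nonneg fun y => sq_nonneg _
  calc (∫ y, g y ∂ν) ^ 2 = |∫ y, g y ∂ν| ^ 2 := (sq_abs _).symm
  _ ≤ (∫ y, |g y| ∂ν) ^ 2 := by
      exact pow_le_pow_left₀ (abs_nonneg _) habs 2
  _ ≤ ((∫ y, g y ^ 2 ∂ν) ^ ((1:ℝ)/2)) ^ 2 := by
      refine pow_le_pow_left₀ (integral_nonneg fun y => abs_nonneg _) hcs' 2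
  _ = ∫ y, g y ^ 2 ∂ν := by
      rw [← Real.rpow_natCast ((∫ y, g y ^ 2 ∂ν) ^ ((1:ℝ)/2)) 2, ← Real.rpow_mul hnn]
      norm_num

lemma glue_glue (u : Finset (Fin d)) (x y z : Fin d → ℝ) :
    glue u (glue u x y) z = glue u x z := by
  funext j; by_cases h : j ∈ u <;> simp [glue, h]

lemma glue_glue_of_subset {u v : Finset (Fin d)} (hv : v ⊆ uᶜ) (x y z : Fin d → ℝ) :
    glue v (glue u x y) z = glue v y z := by
  funext j
  by_cases h : j ∈ v
  · have hu : j ∉ u := Finset.mem_compl.mp (hv h)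
    simp [glue, h, hu]
  · simp [glue, h]

lemma sep_integral (u : Finset (Fin d)) {g h : (Fin d → ℝ) → ℝ}
    (hg : Measurable g) (hh : Measurable h)
    (hgu : ∀ x y, g (glue u x y) = g x) (hhu : ∀ x y, h (glue u x y) = h y) :
    ∫ x, g x * h x ∂(unifCube d)
      = (∫ x, g x ∂(unifCube d)) * (∫ x, h x ∂(unifCube d)) := by
  have h1 : ∫ x, g x * h x ∂(unifCube d)
      = ∫ p : (Fin d → ℝ) × (Fin d → ℝ), g (glue u p.1 p.2) * h (glue u p.1 p.2)
          ∂((unifCube d).prod (unifCube d)) :=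
    (integral_comp_mp (glue_measurePreserving u) (hg.mul hh).aestronglyMeasurable).symm
  rw [h1]
  rw [integral_congr_ae (Filter.Eventually.of_forall
    (fun p : (Fin d → ℝ) × (Fin d → ℝ) => by rw [hgu, hhu] :
      ∀ p : (Fin d → ℝ) × (Fin d → ℝ),
        g (glue u p.1 p.2) * h (glue u p.1 p.2) = g p.1 * h p.2))]
  simpa using integral_prod_mul (μ := unifCube d) (ν := unifCube d) g h

section core

variable {d : ℕ} {f' : (Fin d → ℝ) → ℝ}

lemma Gmeas (hm : Measurable f') (u : Finset (Fin d)) :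
    StronglyMeasurable (fun x => ∫ y, f' (glue u x y) ∂(unifCube d)) :=
  (hm.comp (measurable_glue u)).stronglyMeasurable.integral_prod_right'

lemma Gmem2 (hm : Measurable f') (h2 : MemLp f' 2 (unifCube d)) (u : Finset (Fin d)) :
    MemLp (fun x => ∫ y, f' (glue u x y) ∂(unifCube d)) 2 (unifCube d) := by
  have h2glue : MemLp (fun p : (Fin d → ℝ) × (Fin d → ℝ) => f' (glue u p.1 p.2)) 2
      ((unifCube d).prod (unifCube d)) :=
    memℒp_comp_mp (glue_measurePreserving u) hm.aestronglyMeasurable h2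
  have hsq_int : Integrable (fun p : (Fin d → ℝ) × (Fin d → ℝ) => f' (glue u p.1 p.2) ^ 2)
      ((unifCube d).prod (unifCube d)) := h2glue.integrable_sq
  have hK_int : Integrable (fun x => ∫ y, f' (glue u x y) ^ 2 ∂(unifCube d)) (unifCube d) :=
    hsq_int.integral_prod_left
  have hslice : ∀ᵐ x ∂(unifCube d), MemLp (fun y => f' (glue u x y)) 2 (unifCube d) := by
    filter_upwards [hsq_int.prod_right_ae] with x hx
    have hsm : Measurable (fun y => f' (glue u x y)) :=
      hm.comp ((measurable_glue u).comp (measurable_const.prodMk measurable_id))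
    exact (memLp_two_iff_integrable_sq hsm.aestronglyMeasurable).mpr hx
  have hbound : ∀ᵐ x ∂(unifCube d),
      ‖(∫ y, f' (glue u x y) ∂(unifCube d)) ^ 2‖ ≤ ∫ y, f' (glue u x y) ^ 2 ∂(unifCube d) := by
    filter_upwards [hslice] with x hx
    have := sq_integral_le_integral_sq hx
    calc ‖(∫ y, f' (glue u x y) ∂(unifCube d)) ^ 2‖
        = (∫ y, f' (glue u x y) ∂(unifCube d)) ^ 2 := by
          rw [Real.norm_eq_abs, abs_of_nonneg (sq_nonneg _)]
    _ ≤ _ := this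
  have hGm := Gmeas hm u
  have hint : Integrable (fun x => (∫ y, f' (glue u x y) ∂(unifCube d)) ^ 2) (unifCube d) :=
    Integrable.mono' hK_int ((hGm.measurable.pow_const 2).aestronglyMeasurable) hbound
  exact (memLp_two_iff_integrable_sq hGm.aestronglyMeasurable).mpr hint

lemma Gint (hm : Measurable f') (h2 : MemLp f' 2 (unifCube d)) (u : Finset (Fin d)) :
    ∫ x, (∫ y, f' (glue u x y) ∂(unifCube d)) ∂(unifCube d) = ∫ x, f' x ∂(unifCube d) := by
  have hint : Integrable (fun p : (Fin d → ℝ) × (Fin d → ℝ) => f' (glue u p.1 p.2))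
      ((unifCube d).prod (unifCube d)) :=
    integrable_comp_mp (glue_measurePreserving u) hm.aestronglyMeasurable
      (h2.integrable one_le_two)
  have h1 := integral_integral (f := fun x y => f' (glue u x y)) hint
  rw [h1]
  exact integral_comp_mp (glue_measurePreserving u) hm.aestronglyMeasurable

lemma G_glue (u : Finset (Fin d)) (x y : Fin d → ℝ) :
    (∫ z, f' (glue u (glue u x y) z) ∂(unifCube d)) = ∫ z, f' (glue u x z) ∂(unifCube d) := by
  refine integral_congr_ae (Filter.Eventually.of_forall fun z => ?_)
  simp only []
  rw [glue_glue]

lemma G_glue_subset {u v : Finset (Fin d)} (hv : v ⊆ uᶜ) (x y : Fin d → ℝ) :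
    (∫ z, f' (glue v (glue u x y) z) ∂(unifCube d)) = ∫ z, f' (glue v y z) ∂(unifCube d) := by
  refine integral_congr_ae (Filter.Eventually.of_forall fun z => ?_)
  simp only []
  rw [glue_glue_of_subset hv]

theorem core_eq (hm : Measurable f') (h2 : MemLp f' 2 (unifCube d))
    (u v v' : Finset (Fin d)) (hv : v ⊆ uᶜ) (hv' : v' ⊆ uᶜ) :
    (∫ q : ((Fin d → ℝ) × (Fin d → ℝ)) × ((Fin d → ℝ) × (Fin d → ℝ)),
        (f' q.1.1 - f' (glue v q.1.1 q.1.2)) *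
          (f' (glue u q.1.1 q.2.1) - f' (glue v' q.2.1 q.2.2))
        ∂(((unifCube d).prod (unifCube d)).prod ((unifCube d).prod (unifCube d))))
      = (∫ x, (∫ y, f' (glue u x y) ∂(unifCube d)) ^ 2 ∂(unifCube d))
        - (∫ x, f' x ∂(unifCube d)) ^ 2 := by
  classical
  set μc := unifCube d with hμc
  have hfae : AEStronglyMeasurable f' μc := hm.aestronglyMeasurable
  set ρ := μc.prod μc with hρdef
  -- measure preserving coordinate maps from ρ.prod ρ to μc
  have hφ1 : MeasurePreserving
      (fun q : ((Fin d → ℝ) × (Fin d → ℝ)) × ((Fin d → ℝ) × (Fin d → ℝ)) => q.1.1)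
      (ρ.prod ρ) μc := (mp_fst μc μc).comp (mp_fst ρ ρ)
  have hφ2 : MeasurePreserving
      (fun q : ((Fin d → ℝ) × (Fin d → ℝ)) × ((Fin d → ℝ) × (Fin d → ℝ)) =>
        glue u q.1.1 q.2.1) (ρ.prod ρ) μc :=
    (glue_measurePreserving u).comp ((mp_fst μc μc).prod (mp_fst μc μc))
  have hφ3 : MeasurePreserving
      (fun q : ((Fin d → ℝ) × (Fin d → ℝ)) × ((Fin d → ℝ) × (Fin d → ℝ)) =>
        glue v q.1.1 q.1.2) (ρ.prod ρ) μc :=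
    (glue_measurePreserving v).comp (mp_fst ρ ρ)
  have hφ4 : MeasurePreserving
      (fun q : ((Fin d → ℝ) × (Fin d → ℝ)) × ((Fin d → ℝ) × (Fin d → ℝ)) =>
        glue v' q.2.1 q.2.2) (ρ.prod ρ) μc :=
    (glue_measurePreserving v').comp (mp_snd ρ ρ)
  -- L² memberships
  have A1 : MemLp (fun q : ((Fin d → ℝ) × (Fin d → ℝ)) × ((Fin d → ℝ) × (Fin d → ℝ)) =>
      f' q.1.1) 2 (ρ.prod ρ) := memℒp_comp_mp hφ1 hfae h2
  have A2 : MemLp (fun q : ((Fin d → ℝ) × (Fin d → ℝ)) × ((Fin d → ℝ) × (Fin d → ℝ)) =>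
      f' (glue u q.1.1 q.2.1)) 2 (ρ.prod ρ) := memℒp_comp_mp hφ2 hfae h2
  have A3 : MemLp (fun q : ((Fin d → ℝ) × (Fin d → ℝ)) × ((Fin d → ℝ) × (Fin d → ℝ)) =>
      f' (glue v q.1.1 q.1.2)) 2 (ρ.prod ρ) := memℒp_comp_mp hφ3 hfae h2
  have A4 : MemLp (fun q : ((Fin d → ℝ) × (Fin d → ℝ)) × ((Fin d → ℝ) × (Fin d → ℝ)) =>
      f' (glue v' q.2.1 q.2.2)) 2 (ρ.prod ρ) := memℒp_comp_mp hφ4 hfae h2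
  have hT1 : Integrable (fun q : ((Fin d → ℝ) × (Fin d → ℝ)) × ((Fin d → ℝ) × (Fin d → ℝ)) =>
      f' q.1.1 * f' (glue u q.1.1 q.2.1)) (ρ.prod ρ) := integrable_L2_mul A1 A2
  have hT2 : Integrable (fun q : ((Fin d → ℝ) × (Fin d → ℝ)) × ((Fin d → ℝ) × (Fin d → ℝ)) =>
      f' q.1.1 * f' (glue v' q.2.1 q.2.2)) (ρ.prod ρ) := integrable_L2_mul A1 A4
  have hT3 : Integrable (fun q : ((Fin d → ℝ) × (Fin d → ℝ)) × ((Fin d → ℝ) × (Fin d → ℝ)) =>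
      f' (glue v q.1.1 q.1.2) * f' (glue u q.1.1 q.2.1)) (ρ.prod ρ) := integrable_L2_mul A3 A2
  have hT4 : Integrable (fun q : ((Fin d → ℝ) × (Fin d → ℝ)) × ((Fin d → ℝ) × (Fin d → ℝ)) =>
      f' (glue v q.1.1 q.1.2) * f' (glue v' q.2.1 q.2.2)) (ρ.prod ρ) := integrable_L2_mul A3 A4
  -- split the integral into four terms
  have hsplit : (∫ q : ((Fin d → ℝ) × (Fin d → ℝ)) × ((Fin d → ℝ) × (Fin d → ℝ)),
        (f' q.1.1 - f' (glue v q.1.1 q.1.2)) *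
          (f' (glue u q.1.1 q.2.1) - f' (glue v' q.2.1 q.2.2)) ∂(ρ.prod ρ))
      = (∫ q, f' q.1.1 * f' (glue u q.1.1 q.2.1) ∂(ρ.prod ρ))
        - (∫ q, f' q.1.1 * f' (glue v' q.2.1 q.2.2) ∂(ρ.prod ρ))
        - (∫ q, f' (glue v q.1.1 q.1.2) * f' (glue u q.1.1 q.2.1) ∂(ρ.prod ρ))
        + (∫ q, f' (glue v q.1.1 q.1.2) * f' (glue v' q.2.1 q.2.2) ∂(ρ.prod ρ)) := by
    have hT12 : Integrable (fun q : ((Fin d → ℝ) × (Fin d → ℝ)) × ((Fin d → ℝ) × (Fin d → ℝ)) =>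
        f' q.1.1 * f' (glue u q.1.1 q.2.1) - f' q.1.1 * f' (glue v' q.2.1 q.2.2)) (ρ.prod ρ) :=
      hT1.sub hT2
    have hT123 : Integrable (fun q : ((Fin d → ℝ) × (Fin d → ℝ)) × ((Fin d → ℝ) × (Fin d → ℝ)) =>
        f' q.1.1 * f' (glue u q.1.1 q.2.1) - f' q.1.1 * f' (glue v' q.2.1 q.2.2)
          - f' (glue v q.1.1 q.1.2) * f' (glue u q.1.1 q.2.1)) (ρ.prod ρ) := hT12.sub hT3
    rw [show (fun q : ((Fin d → ℝ) × (Fin d → ℝ)) × ((Fin d → ℝ) × (Fin d → ℝ)) =>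
        (f' q.1.1 - f' (glue v q.1.1 q.1.2)) *
          (f' (glue u q.1.1 q.2.1) - f' (glue v' q.2.1 q.2.2)))
      = (fun q : ((Fin d → ℝ) × (Fin d → ℝ)) × ((Fin d → ℝ) × (Fin d → ℝ)) =>
        f' q.1.1 * f' (glue u q.1.1 q.2.1) - f' q.1.1 * f' (glue v' q.2.1 q.2.2)
          - f' (glue v q.1.1 q.1.2) * f' (glue u q.1.1 q.2.1)
          + f' (glue v q.1.1 q.1.2) * f' (glue v' q.2.1 q.2.2))
      from funext fun q => by ring]
    rw [integral_add hT123 hT4, integral_sub hT12 hT3, integral_sub hT1 hT2]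
  -- marginal integrals
  have hm2 : ∫ p : (Fin d → ℝ) × (Fin d → ℝ), f' p.1 ∂ρ = ∫ x, f' x ∂μc :=
    integral_comp_mp (mp_fst μc μc) hfae
  have hmv : ∫ p : (Fin d → ℝ) × (Fin d → ℝ), f' (glue v p.1 p.2) ∂ρ = ∫ x, f' x ∂μc :=
    integral_comp_mp (glue_measurePreserving v) hfae
  have hmv' : ∫ p : (Fin d → ℝ) × (Fin d → ℝ), f' (glue v' p.1 p.2) ∂ρ = ∫ x, f' x ∂μc :=
    integral_comp_mp (glue_measurePreserving v') hfae
  have I2 : ∫ q, f' q.1.1 * f' (glue v' q.2.1 q.2.2) ∂(ρ.prod ρ)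
      = (∫ x, f' x ∂μc) * (∫ x, f' x ∂μc) := by
    have := integral_prod_mul (μ := ρ) (ν := ρ)
      (fun p : (Fin d → ℝ) × (Fin d → ℝ) => f' p.1)
      (fun p : (Fin d → ℝ) × (Fin d → ℝ) => f' (glue v' p.1 p.2))
    rw [hm2, hmv'] at this
    simpa using this
  have I4 : ∫ q, f' (glue v q.1.1 q.1.2) * f' (glue v' q.2.1 q.2.2) ∂(ρ.prod ρ)
      = (∫ x, f' x ∂μc) * (∫ x, f' x ∂μc) := by
    have := integral_prod_mul (μ := ρ) (ν := ρ)
      (fun p : (Fin d → ℝ) × (Fin d → ℝ) => f' (glue v p.1 p.2))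
      (fun p : (Fin d → ℝ) × (Fin d → ℝ) => f' (glue v' p.1 p.2))
    rw [hmv, hmv'] at this
    simpa using this
  -- auxiliary facts about `Gu`
  have hGu_m : Measurable (fun x => ∫ y, f' (glue u x y) ∂μc) := (Gmeas hm u).measurable
  have hGv_m : Measurable (fun x => ∫ z, f' (glue v x z) ∂μc) := (Gmeas hm v).measurable
  have hGu2 : MemLp (fun x => ∫ y, f' (glue u x y) ∂μc) 2 μc := Gmem2 hm h2 u
  have hmarg : ∀ x : Fin d → ℝ,
      (∫ p : (Fin d → ℝ) × (Fin d → ℝ), f' (glue u x p.1) ∂ρ) = ∫ y, f' (glue u x y) ∂μc := by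
    intro x
    exact integral_comp_mp (mp_fst μc μc)
      (hm.comp ((measurable_glue u).comp (measurable_const.prodMk measurable_id))).aestronglyMeasurable
  -- term 1
  have I1a : ∫ q, f' q.1.1 * f' (glue u q.1.1 q.2.1) ∂(ρ.prod ρ)
      = ∫ p : (Fin d → ℝ) × (Fin d → ℝ), f' p.1 * (∫ y, f' (glue u p.1 y) ∂μc) ∂ρ := by
    rw [integral_prod _ hT1]
    refine integral_congr_ae (Filter.Eventually.of_forall fun p => ?_)
    simp only []
    rw [integral_const_mul, hmarg p.1]
  have I1b : ∫ p : (Fin d → ℝ) × (Fin d → ℝ), f' p.1 * (∫ y, f' (glue u p.1 y) ∂μc) ∂ρ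
      = ∫ x, f' x * (∫ y, f' (glue u x y) ∂μc) ∂μc :=
    integral_comp_mp (mp_fst μc μc) (hm.mul hGu_m).aestronglyMeasurable
  have I1c : ∫ x, f' x * (∫ y, f' (glue u x y) ∂μc) ∂μc
      = ∫ x, (∫ y, f' (glue u x y) ∂μc) ^ 2 ∂μc := by
    have hb : ∫ x, f' x * (∫ y, f' (glue u x y) ∂μc) ∂μc
        = ∫ p : (Fin d → ℝ) × (Fin d → ℝ),
            f' (glue u p.1 p.2) * (∫ y, f' (glue u (glue u p.1 p.2) y) ∂μc) ∂ρ :=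
      (integral_comp_mp (glue_measurePreserving u) (hm.mul hGu_m).aestronglyMeasurable).symm
    rw [hb]
    have hb2 : ∀ p : (Fin d → ℝ) × (Fin d → ℝ),
        f' (glue u p.1 p.2) * (∫ y, f' (glue u (glue u p.1 p.2) y) ∂μc)
          = f' (glue u p.1 p.2) * (∫ y, f' (glue u p.1 y) ∂μc) := fun p => by
      rw [G_glue]
    rw [integral_congr_ae (Filter.Eventually.of_forall hb2)]
    have hint' : Integrable (fun p : (Fin d → ℝ) × (Fin d → ℝ) =>
        f' (glue u p.1 p.2) * (∫ y, f' (glue u p.1 y) ∂μc)) ρ :=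
      integrable_L2_mul (memℒp_comp_mp (glue_measurePreserving u) hfae h2)
        (memℒp_comp_mp (mp_fst μc μc) hGu_m.aestronglyMeasurable hGu2)
    rw [hρdef] at hint' ⊢
    rw [integral_prod _ hint']
    refine integral_congr_ae (Filter.Eventually.of_forall fun x => ?_)
    simp only []
    rw [integral_mul_const, sq]
  -- term 3
  have I3a : ∫ q, f' (glue v q.1.1 q.1.2) * f' (glue u q.1.1 q.2.1) ∂(ρ.prod ρ)
      = ∫ p : (Fin d → ℝ) × (Fin d → ℝ),
          f' (glue v p.1 p.2) * (∫ y, f' (glue u p.1 y) ∂μc) ∂ρ := by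
    rw [integral_prod _ hT3]
    refine integral_congr_ae (Filter.Eventually.of_forall fun p => ?_)
    simp only []
    rw [integral_const_mul, hmarg p.1]
  have I3b : ∫ p : (Fin d → ℝ) × (Fin d → ℝ),
        f' (glue v p.1 p.2) * (∫ y, f' (glue u p.1 y) ∂μc) ∂ρ
      = ∫ x, (∫ z, f' (glue v x z) ∂μc) * (∫ y, f' (glue u x y) ∂μc) ∂μc := by
    have hint' : Integrable (fun p : (Fin d → ℝ) × (Fin d → ℝ) =>
        f' (glue v p.1 p.2) * (∫ y, f' (glue u p.1 y) ∂μc)) ρ :=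
      integrable_L2_mul (memℒp_comp_mp (glue_measurePreserving v) hfae h2)
        (memℒp_comp_mp (mp_fst μc μc) hGu_m.aestronglyMeasurable hGu2)
    rw [hρdef] at hint' ⊢
    rw [integral_prod _ hint']
    refine integral_congr_ae (Filter.Eventually.of_forall fun x => ?_)
    simp only []
    rw [integral_mul_const]
  have I3c : ∫ x, (∫ z, f' (glue v x z) ∂μc) * (∫ y, f' (glue u x y) ∂μc) ∂μc
      = (∫ x, f' x ∂μc) * (∫ x, f' x ∂μc) := by
    calc ∫ x, (∫ z, f' (glue v x z) ∂μc) * (∫ y, f' (glue u x y) ∂μc) ∂μc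
        = ∫ x, (∫ y, f' (glue u x y) ∂μc) * (∫ z, f' (glue v x z) ∂μc) ∂μc :=
          integral_congr_ae (Filter.Eventually.of_forall fun x => mul_comm _ _)
    _ = (∫ x, (∫ y, f' (glue u x y) ∂μc) ∂μc) * (∫ x, (∫ z, f' (glue v x z) ∂μc) ∂μc) :=
          sep_integral u hGu_m hGv_m (fun x y => G_glue u x y)
            (fun x y => G_glue_subset hv x y)
    _ = (∫ x, f' x ∂μc) * (∫ x, f' x ∂μc) := by
          rw [Gint hm h2 u, Gint hm h2 v]
  rw [hsplit, I1a, I1b, I1c, I2, I3a, I3b, I3c, I4]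
  ring

theorem core_integrable (hm : Measurable f') (h2 : MemLp f' 2 (unifCube d))
    (u v v' : Finset (Fin d)) :
    Integrable (fun q : ((Fin d → ℝ) × (Fin d → ℝ)) × ((Fin d → ℝ) × (Fin d → ℝ)) =>
        (f' q.1.1 - f' (glue v q.1.1 q.1.2)) *
          (f' (glue u q.1.1 q.2.1) - f' (glue v' q.2.1 q.2.2)))
      (((unifCube d).prod (unifCube d)).prod ((unifCube d).prod (unifCube d))) := by
  set μc := unifCube d with hμc
  set ρ := μc.prod μc with hρdef
  have hfae : AEStronglyMeasurable f' μc := hm.aestronglyMeasurable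
  have hφ1 : MeasurePreserving
      (fun q : ((Fin d → ℝ) × (Fin d → ℝ)) × ((Fin d → ℝ) × (Fin d → ℝ)) => q.1.1)
      (ρ.prod ρ) μc := (mp_fst μc μc).comp (mp_fst ρ ρ)
  have hφ2 : MeasurePreserving
      (fun q : ((Fin d → ℝ) × (Fin d → ℝ)) × ((Fin d → ℝ) × (Fin d → ℝ)) =>
        glue u q.1.1 q.2.1) (ρ.prod ρ) μc :=
    (glue_measurePreserving u).comp ((mp_fst μc μc).prod (mp_fst μc μc))
  have hφ3 : MeasurePreserving
      (fun q : ((Fin d → ℝ) × (Fin d → ℝ)) × ((Fin d → ℝ) × (Fin d → ℝ)) =>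
        glue v q.1.1 q.1.2) (ρ.prod ρ) μc :=
    (glue_measurePreserving v).comp (mp_fst ρ ρ)
  have hφ4 : MeasurePreserving
      (fun q : ((Fin d → ℝ) × (Fin d → ℝ)) × ((Fin d → ℝ) × (Fin d → ℝ)) =>
        glue v' q.2.1 q.2.2) (ρ.prod ρ) μc :=
    (glue_measurePreserving v').comp (mp_snd ρ ρ)
  have A1 : MemLp (fun q : ((Fin d → ℝ) × (Fin d → ℝ)) × ((Fin d → ℝ) × (Fin d → ℝ)) =>
      f' q.1.1) 2 (ρ.prod ρ) := memℒp_comp_mp hφ1 hfae h2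
  have A2 : MemLp (fun q : ((Fin d → ℝ) × (Fin d → ℝ)) × ((Fin d → ℝ) × (Fin d → ℝ)) =>
      f' (glue u q.1.1 q.2.1)) 2 (ρ.prod ρ) := memℒp_comp_mp hφ2 hfae h2
  have A3 : MemLp (fun q : ((Fin d → ℝ) × (Fin d → ℝ)) × ((Fin d → ℝ) × (Fin d → ℝ)) =>
      f' (glue v q.1.1 q.1.2)) 2 (ρ.prod ρ) := memℒp_comp_mp hφ3 hfae h2
  have A4 : MemLp (fun q : ((Fin d → ℝ) × (Fin d → ℝ)) × ((Fin d → ℝ) × (Fin d → ℝ)) =>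
      f' (glue v' q.2.1 q.2.2)) 2 (ρ.prod ρ) := memℒp_comp_mp hφ4 hfae h2
  exact integrable_L2_mul (A1.sub A3) (A2.sub A4)

end core

end SobolAux






open ProbabilityTheory

theorem stmt15 {d : ℕ} (hd : 1 ≤ d) (f : (Fin d → ℝ) → ℝ)
    (hf : MemLp f 2 (unifCube d))
    (u v v' : Finset (Fin d)) (hv : v ⊆ uᶜ) (hv' : v' ⊆ uᶜ)
    (n : ℕ) (hn : 0 < n)
    {Ω : Type*} [MeasurableSpace Ω] (P : Measure Ω) [IsProbabilityMeasure P]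
    -- `X (i, 0) = xᵢ`, `X (i, 1) = yᵢ`, `X (i, 2) = zᵢ`, `X (i, 3) = wᵢ`:
    -- i.i.d. quadruples whose four components are independent, i.e. the whole
    -- family of `4 n` random vectors is independent and uniform on `[0,1]^d`.
    (X : Fin n × Fin 4 → Ω → (Fin d → ℝ))
    (hXmeas : ∀ i, Measurable (X i))
    (hXindep : iIndepFun X P)
    (hXunif : ∀ i, Measure.map (X i) P = unifCube d) :
    (∫ ω, (1 / (n : ℝ)) * ∑ i : Fin n,
        (f (X (i, 0) ω) - f (glue v (X (i, 0) ω) (X (i, 2) ω)))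
          * (f (glue u (X (i, 0) ω) (X (i, 1) ω))
              - f (glue v' (X (i, 1) ω) (X (i, 3) ω))) ∂P)
      = lowerSobol f u := by
  classical
  obtain ⟨f₀, hf₀sm, hff₀⟩ : ∃ f₀, StronglyMeasurable f₀ ∧ f =ᵐ[unifCube d] f₀ :=
    ⟨hf.1.mk f, hf.1.stronglyMeasurable_mk, hf.1.ae_eq_mk⟩
  have hf₀m : Measurable f₀ := hf₀sm.measurable
  have h2' : MemLp f₀ 2 (unifCube d) := hf.ae_eq hff₀
  set μc := unifCube d with hμc
  set ρ := μc.prod μc with hρdef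
  set σm := ρ.prod ρ with hσdef
  set F : ((Fin d → ℝ) × (Fin d → ℝ)) × ((Fin d → ℝ) × (Fin d → ℝ)) → ℝ :=
    fun q => (f q.1.1 - f (glue v q.1.1 q.1.2)) *
      (f (glue u q.1.1 q.2.1) - f (glue v' q.2.1 q.2.2)) with hFdef
  set F₀ : ((Fin d → ℝ) × (Fin d → ℝ)) × ((Fin d → ℝ) × (Fin d → ℝ)) → ℝ :=
    fun q => (f₀ q.1.1 - f₀ (glue v q.1.1 q.1.2)) *
      (f₀ (glue u q.1.1 q.2.1) - f₀ (glue v' q.2.1 q.2.2)) with hF₀def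
  have hφ1 : MeasurePreserving
      (fun q : ((Fin d → ℝ) × (Fin d → ℝ)) × ((Fin d → ℝ) × (Fin d → ℝ)) => q.1.1)
      σm μc := (SobolAux.mp_fst μc μc).comp (SobolAux.mp_fst ρ ρ)
  have hφ2 : MeasurePreserving
      (fun q : ((Fin d → ℝ) × (Fin d → ℝ)) × ((Fin d → ℝ) × (Fin d → ℝ)) =>
        glue u q.1.1 q.2.1) σm μc :=
    (SobolAux.glue_measurePreserving u).comp
      ((SobolAux.mp_fst μc μc).prod (SobolAux.mp_fst μc μc))
  have hφ3 : MeasurePreserving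
      (fun q : ((Fin d → ℝ) × (Fin d → ℝ)) × ((Fin d → ℝ) × (Fin d → ℝ)) =>
        glue v q.1.1 q.1.2) σm μc :=
    (SobolAux.glue_measurePreserving v).comp (SobolAux.mp_fst ρ ρ)
  have hφ4 : MeasurePreserving
      (fun q : ((Fin d → ℝ) × (Fin d → ℝ)) × ((Fin d → ℝ) × (Fin d → ℝ)) =>
        glue v' q.2.1 q.2.2) σm μc :=
    (SobolAux.glue_measurePreserving v').comp (SobolAux.mp_snd ρ ρ)
  have hcomp : ∀ (φ : ((Fin d → ℝ) × (Fin d → ℝ)) × ((Fin d → ℝ) × (Fin d → ℝ)) → (Fin d → ℝ)),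
      MeasurePreserving φ σm μc →
        (fun q => f (φ q)) =ᵐ[σm] (fun q => f₀ (φ q)) := fun φ hφ => by
    have := MeasureTheory.ae_eq_comp (hφ.measurable.aemeasurable)
      (by rwa [hφ.map_eq] : f =ᵐ[Measure.map φ σm] f₀)
    exact this
  have hFae : F =ᵐ[σm] F₀ := by
    filter_upwards [hcomp _ hφ1, hcomp _ hφ2, hcomp _ hφ3, hcomp _ hφ4] with q e1 e2 e3 e4
    show (f q.1.1 - f (glue v q.1.1 q.1.2)) *
        (f (glue u q.1.1 q.2.1) - f (glue v' q.2.1 q.2.2))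
      = (f₀ q.1.1 - f₀ (glue v q.1.1 q.1.2)) *
        (f₀ (glue u q.1.1 q.2.1) - f₀ (glue v' q.2.1 q.2.2))
    rw [show f q.1.1 = f₀ q.1.1 from e1,
      show f (glue u q.1.1 q.2.1) = f₀ (glue u q.1.1 q.2.1) from e2,
      show f (glue v q.1.1 q.1.2) = f₀ (glue v q.1.1 q.1.2) from e3,
      show f (glue v' q.2.1 q.2.2) = f₀ (glue v' q.2.1 q.2.2) from e4]
  have hF₀meas : Measurable F₀ :=
    ((hf₀m.comp measurable_fst.fst).sub
      (hf₀m.comp ((SobolAux.measurable_glue v).comp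
        (measurable_fst.fst.prodMk measurable_fst.snd)))).mul
    ((hf₀m.comp ((SobolAux.measurable_glue u).comp
        (measurable_fst.fst.prodMk measurable_snd.fst))).sub
      (hf₀m.comp ((SobolAux.measurable_glue v').comp
        (measurable_snd.fst.prodMk measurable_snd.snd))))
  have hF₀int : Integrable F₀ σm := SobolAux.core_integrable hf₀m h2' u v v'
  have hFint : Integrable F σm := hF₀int.congr hFae.symm
  have hFaesm : AEStronglyMeasurable F σm :=
    hF₀meas.aestronglyMeasurable.congr hFae.symm
  have hIval : ∫ q, F q ∂σm
      = (∫ x, (∫ y, f₀ (glue u x y) ∂μc) ^ 2 ∂μc) - (∫ x, f₀ x ∂μc) ^ 2 := by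
    rw [integral_congr_ae hFae]
    exact SobolAux.core_eq hf₀m h2' u v v' hv hv'
  -- law of the sampled quadruple
  have lawQ : ∀ i : Fin n,
      Measure.map (fun ω => ((X (i, 0) ω, X (i, 2) ω), (X (i, 1) ω, X (i, 3) ω))) P = σm := by
    intro i
    have hne : ∀ (a b : Fin 4), a ≠ b → ((i, a) : Fin n × Fin 4) ≠ (i, b) :=
      fun a b hab h => hab (congrArg Prod.snd h)
    have h02 : IndepFun (X (i, 0)) (X (i, 2)) P := hXindep.indepFun (hne 0 2 (by decide))
    have h13 : IndepFun (X (i, 1)) (X (i, 3)) P := hXindep.indepFun (hne 1 3 (by decide))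
    have l02 : Measure.map (fun ω => (X (i, 0) ω, X (i, 2) ω)) P = ρ := by
      rw [(indepFun_iff_map_prod_eq_prod_map_map (hXmeas _).aemeasurable
        (hXmeas _).aemeasurable).mp h02, hXunif, hXunif]
    have l13 : Measure.map (fun ω => (X (i, 1) ω, X (i, 3) ω)) P = ρ := by
      rw [(indepFun_iff_map_prod_eq_prod_map_map (hXmeas _).aemeasurable
        (hXmeas _).aemeasurable).mp h13, hXunif, hXunif]
    have hpair : IndepFun (fun ω => (X (i, 0) ω, X (i, 2) ω))
        (fun ω => (X (i, 1) ω, X (i, 3) ω)) P :=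
      hXindep.indepFun_prodMk_prodMk hXmeas (i, 0) (i, 2) (i, 1) (i, 3)
        (hne 0 1 (by decide)) (hne 0 3 (by decide)) (hne 2 1 (by decide)) (hne 2 3 (by decide))
    rw [(indepFun_iff_map_prod_eq_prod_map_map
      ((hXmeas _).prodMk (hXmeas _)).aemeasurable
      ((hXmeas _).prodMk (hXmeas _)).aemeasurable).mp hpair, l02, l13]
  have hQm : ∀ i : Fin n,
      Measurable (fun ω => ((X (i, 0) ω, X (i, 2) ω), (X (i, 1) ω, X (i, 3) ω))) :=
    fun i => ((hXmeas _).prodMk (hXmeas _)).prodMk ((hXmeas _).prodMk (hXmeas _))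
  have hmap_int : ∀ i : Fin n,
      (∫ ω, (f (X (i, 0) ω) - f (glue v (X (i, 0) ω) (X (i, 2) ω)))
          * (f (glue u (X (i, 0) ω) (X (i, 1) ω))
              - f (glue v' (X (i, 1) ω) (X (i, 3) ω))) ∂P) = ∫ q, F q ∂σm := by
    intro i
    rw [← lawQ i]
    exact (integral_map (hQm i).aemeasurable (by rwa [lawQ i])).symm
  have hQint : ∀ i : Fin n,
      Integrable (fun ω => (f (X (i, 0) ω) - f (glue v (X (i, 0) ω) (X (i, 2) ω)))
          * (f (glue u (X (i, 0) ω) (X (i, 1) ω))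
              - f (glue v' (X (i, 1) ω) (X (i, 3) ω)))) P := by
    intro i
    have h1 : Integrable F
        (Measure.map (fun ω => ((X (i, 0) ω, X (i, 2) ω), (X (i, 1) ω, X (i, 3) ω))) P) := by
      rw [lawQ i]; exact hFint
    exact (integrable_map_measure (by rw [lawQ i]; exact hFaesm)
      (hQm i).aemeasurable).mp h1
  have hIeq : ∀ i : Fin n,
      (∫ ω, (f (X (i, 0) ω) - f (glue v (X (i, 0) ω) (X (i, 2) ω)))
          * (f (glue u (X (i, 0) ω) (X (i, 1) ω))
              - f (glue v' (X (i, 1) ω) (X (i, 3) ω))) ∂P)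
        = (∫ x, (∫ y, f₀ (glue u x y) ∂μc) ^ 2 ∂μc) - (∫ x, f₀ x ∂μc) ^ 2 :=
    fun i => (hmap_int i).trans hIval
  -- identify `lowerSobol f u` with the `f₀` expression
  have hmm : ∫ x, f x ∂μc = ∫ x, f₀ x ∂μc := integral_congr_ae hff₀
  have houter : ∫ x, (∫ y, f (glue u x y) ∂μc) ^ 2 ∂μc
      = ∫ x, (∫ y, f₀ (glue u x y) ∂μc) ^ 2 ∂μc := by
    have hae2 : (fun p : (Fin d → ℝ) × (Fin d → ℝ) => f (glue u p.1 p.2))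
        =ᵐ[ρ] (fun p => f₀ (glue u p.1 p.2)) := by
      have := MeasureTheory.ae_eq_comp
        ((SobolAux.measurable_glue u).aemeasurable (μ := ρ))
        (by rwa [(SobolAux.glue_measurePreserving u).map_eq] :
          f =ᵐ[Measure.map (fun p : (Fin d → ℝ) × (Fin d → ℝ) => glue u p.1 p.2) ρ] f₀)
      exact this
    have h3 := Measure.ae_ae_eq_curry_of_prod hae2
    refine integral_congr_ae ?_
    filter_upwards [h3] with x hx
    have he : (∫ y, f (glue u x y) ∂μc) = ∫ y, f₀ (glue u x y) ∂μc := integral_congr_ae hx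
    rw [he]
  have hLS : lowerSobol f u
      = (∫ x, (∫ y, f₀ (glue u x y) ∂μc) ^ 2 ∂μc) - (∫ x, f₀ x ∂μc) ^ 2 := by
    rw [lowerSobol, ← hμc, houter, hmm]
  -- assemble
  have hconst : (∫ ω, (1 / (n : ℝ)) * ∑ i : Fin n,
        (f (X (i, 0) ω) - f (glue v (X (i, 0) ω) (X (i, 2) ω)))
          * (f (glue u (X (i, 0) ω) (X (i, 1) ω))
              - f (glue v' (X (i, 1) ω) (X (i, 3) ω))) ∂P)
      = (1 / (n : ℝ)) * ∫ ω, ∑ i : Fin n,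
        (f (X (i, 0) ω) - f (glue v (X (i, 0) ω) (X (i, 2) ω)))
          * (f (glue u (X (i, 0) ω) (X (i, 1) ω))
              - f (glue v' (X (i, 1) ω) (X (i, 3) ω))) ∂P :=
    integral_const_mul _ _
  have hsum : (∫ ω, ∑ i : Fin n,
        (f (X (i, 0) ω) - f (glue v (X (i, 0) ω) (X (i, 2) ω)))
          * (f (glue u (X (i, 0) ω) (X (i, 1) ω))
              - f (glue v' (X (i, 1) ω) (X (i, 3) ω))) ∂P)
      = ∑ i : Fin n, ∫ ω,
        (f (X (i, 0) ω) - f (glue v (X (i, 0) ω) (X (i, 2) ω)))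
          * (f (glue u (X (i, 0) ω) (X (i, 1) ω))
              - f (glue v' (X (i, 1) ω) (X (i, 3) ω))) ∂P :=
    integral_finset_sum Finset.univ (fun i _ => hQint i)
  rw [hconst, hsum]
  simp only [hIeq]
  rw [Finset.sum_const, Finset.card_univ, Fintype.card_fin, nsmul_eq_mul, hLS]
  have hn' : (n : ℝ) ≠ 0 := Nat.cast_ne_zero.mpr hn.ne'
  rw [← mul_assoc, one_div, inv_mul_cancel₀ hn', one_mul]
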